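/- With positions as in the previous factorization lemma, suppose additionally d_i ≥ Σ_{j<i}(m_j − 1) d_j + δ for all i, where δ > 0 and all d_j > 0. Then the positions x[m] are strictly increasing in m (under the mixed-radix ordering) with consecutive spacing x[m] − x[m−1] ≥ δ for all 2 ≤ m ≤ M. -/

import Mathlib

open Finset

/-- Sum over `Iio i` in `Fin I` of a function factoring through `val` equals
a sum over `range i.val`. -/
lemma fin_Iio_sum_eq {R : Type*} [AddCommMonoid R] {I : ℕ} (i : Fin I) (F : ℕ → R) :
    ∑ j ∈ Finset.Iio i, F j.val = ∑ n ∈ Finset.range i.val, F n := by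
  rw [← Nat.Iio_eq_range, ← Fin.map_valEmbedding_Iio, Finset.sum_map]
  rfl

lemma fin_Iio_prod_eq {R : Type*} [CommMonoid R] {I : ℕ} (i : Fin I) (F : ℕ → R) :
    ∏ j ∈ Finset.Iio i, F j.val = ∏ n ∈ Finset.range i.val, F n := by
  rw [← Nat.Iio_eq_range, ← Fin.map_valEmbedding_Iio, Finset.prod_map]
  rfl

/-- Minimum spacing of the mixed-radix position construction: if
    d_i ≥ Σ_{j<i}(m_j − 1)d_j + δ with δ > 0 and d_j > 0, then positions
    x = Σ_i u_i d_i are strictly increasing along the mixed-radix ordering of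
    the digit vectors, with consecutive spacing at least δ. -/
theorem mixed_radix_min_spacing (I : ℕ) (mfac : Fin I → ℕ)
    (hm : ∀ i, 2 ≤ mfac i) (d : Fin I → ℝ) (δ : ℝ) (hδ : 0 < δ)
    (hdpos : ∀ i, 0 < d i)
    (hdi : ∀ i : Fin I,
      d i ≥ (∑ j ∈ Finset.Iio i, ((mfac j : ℝ) - 1) * d j) + δ)
    (u u' : (i : Fin I) → Fin (mfac i))
    (hcons : (∑ i : Fin I, (u' i : ℕ) * ∏ j ∈ Finset.Iio i, mfac j) =
      (∑ i : Fin I, (u i : ℕ) * ∏ j ∈ Finset.Iio i, mfac j) + 1) :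
    (∑ i : Fin I, ((u' i : ℕ) : ℝ) * d i) ≥
      (∑ i : Fin I, ((u i : ℕ) : ℝ) * d i) + δ := by
  classical
  -- ℕ-indexed versions of all data
  set M : ℕ → ℕ := fun n => if h : n < I then mfac ⟨n, h⟩ else 2 with hMdef
  set U : ℕ → ℕ := fun n => if h : n < I then (u ⟨n, h⟩ : ℕ) else 0 with hUdef
  set U' : ℕ → ℕ := fun n => if h : n < I then (u' ⟨n, h⟩ : ℕ) else 0 with hU'def
  set D : ℕ → ℝ := fun n => if h : n < I then d ⟨n, h⟩ else 1 with hDdef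
  set Q : ℕ → ℕ := fun n => ∏ t ∈ Finset.range n, M t with hQdef
  have hMval : ∀ i : Fin I, M i.val = mfac i := by
    intro i; simp [hMdef, i.isLt]
  have hUval : ∀ i : Fin I, U i.val = (u i : ℕ) := by
    intro i; simp [hUdef, i.isLt]
  have hU'val : ∀ i : Fin I, U' i.val = (u' i : ℕ) := by
    intro i; simp [hU'def, i.isLt]
  have hDval : ∀ i : Fin I, D i.val = d i := by
    intro i; simp [hDdef, i.isLt]
  have hM1 : ∀ n, 1 ≤ M n := by
    intro n
    by_cases h : n < I
    · have := hm ⟨n, h⟩; simp [hMdef, h]; omega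
    · simp [hMdef, h]
  have hUlt : ∀ n, n < I → U n < M n := by
    intro n h
    simp only [hUdef, hMdef, dif_pos h]
    exact (u ⟨n, h⟩).isLt
  have hU'lt : ∀ n, n < I → U' n < M n := by
    intro n h
    simp only [hU'def, hMdef, dif_pos h]
    exact (u' ⟨n, h⟩).isLt
  -- products over Iio equal Q
  have hPQ : ∀ i : Fin I, (∏ j ∈ Finset.Iio i, mfac j) = Q i.val := by
    intro i
    simp only [hQdef]
    rw [← fin_Iio_prod_eq i M]
    exact Finset.prod_congr rfl fun j _ => (hMval j).symm
  -- telescoping identity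
  have tel : ∀ n, (∑ j ∈ Finset.range n, (M j - 1) * Q j) + 1 = Q n := by
    intro n
    induction n with
    | zero => simp [hQdef]
    | succ n ih =>
      rw [Finset.sum_range_succ]
      have hQs : Q (n + 1) = M n * Q n := by
        simp only [hQdef, Finset.prod_range_succ]
        ring
      have h1 : M n - 1 + 1 = M n := Nat.sub_add_cancel (hM1 n)
      calc (∑ j ∈ Finset.range n, (M j - 1) * Q j) + (M n - 1) * Q n + 1
          = ((∑ j ∈ Finset.range n, (M j - 1) * Q j) + 1) + (M n - 1) * Q n := by ring
        _ = Q n + (M n - 1) * Q n := by rw [ih]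
        _ = (M n - 1 + 1) * Q n := by ring
        _ = M n * Q n := by rw [h1]
        _ = Q (n + 1) := hQs.symm
  -- hcons in ℕ-indexed form
  have hsumU : (∑ i : Fin I, (u i : ℕ) * ∏ j ∈ Finset.Iio i, mfac j) =
      ∑ n ∈ Finset.range I, U n * Q n := by
    rw [← Fin.sum_univ_eq_sum_range (fun n => U n * Q n) I]
    exact Finset.sum_congr rfl fun i _ => by rw [hUval, hPQ]
  have hsumU' : (∑ i : Fin I, (u' i : ℕ) * ∏ j ∈ Finset.Iio i, mfac j) =
      ∑ n ∈ Finset.range I, U' n * Q n := by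
    rw [← Fin.sum_univ_eq_sum_range (fun n => U' n * Q n) I]
    exact Finset.sum_congr rfl fun i _ => by rw [hU'val, hPQ]
  have hconsN : (∑ n ∈ Finset.range I, U' n * Q n) =
      (∑ n ∈ Finset.range I, U n * Q n) + 1 := by
    rw [← hsumU, ← hsumU', hcons]
  -- existence of a non-maximal digit of u
  have hex : ∃ n, n < I ∧ U n + 1 < M n := by
    by_contra hno
    push_neg at hno
    have hmax : ∀ n ∈ Finset.range I, U n * Q n = (M n - 1) * Q n := by
      intro n hn
      rw [Finset.mem_range] at hn
      have h1 := hno n hn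
      have h2 := hUlt n hn
      have : U n = M n - 1 := by omega
      rw [this]
    have hU'le : ∀ n ∈ Finset.range I, U' n * Q n ≤ (M n - 1) * Q n := by
      intro n hn
      rw [Finset.mem_range] at hn
      exact Nat.mul_le_mul_right _ (by have := hU'lt n hn; omega)
    have e1 : (∑ n ∈ Finset.range I, U n * Q n) + 1 = Q I := by
      rw [Finset.sum_congr rfl hmax]; exact tel I
    have e2 : (∑ n ∈ Finset.range I, U' n * Q n) + 1 ≤ Q I := by
      calc (∑ n ∈ Finset.range I, U' n * Q n) + 1
          ≤ (∑ n ∈ Finset.range I, (M n - 1) * Q n) + 1 :=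
            Nat.add_le_add_right (Finset.sum_le_sum hU'le) 1
        _ = Q I := tel I
    omega
  -- least such index
  set k := Nat.find hex with hkdef
  obtain ⟨hkI, hkdig⟩ := Nat.find_spec hex
  have hkmin : ∀ j, j < k → U j + 1 = M j := by
    intro j hj
    have h1 := Nat.find_min hex hj
    push_neg at h1
    have hjI : j < I := lt_trans hj hkI
    have := hUlt j hjI
    have := h1 hjI
    omega
  -- the incremented digit vector
  set W : ℕ → ℕ := fun n => if n < k then 0 else if n = k then U k + 1 else U n
    with hWdef
  have hWlt : ∀ n, n < I → W n < M n := by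
    intro n hn
    rcases lt_trichotomy n k with h | h | h
    · simp only [hWdef, if_pos h]; exact lt_of_lt_of_le Nat.one_pos (hM1 n)
    · simp only [hWdef, if_neg (by omega : ¬ n < k), if_pos h]
      rw [h]; exact hkdig
    · simp only [hWdef, if_neg (by omega : ¬ n < k), if_neg (by omega : ¬ n = k)]
      exact hUlt n hn
  obtain ⟨w, hwW⟩ : ∃ w : (i : Fin I) → Fin (mfac i), ∀ i, (w i : ℕ) = W i.val :=
    ⟨fun i => ⟨W i.val, by rw [← hMval i]; exact hWlt i.val i.isLt⟩, fun _ => rfl⟩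
  -- value of W
  have hsplit : ∀ (R : Type) (_ : AddCommMonoid R) (F : ℕ → R),
      ∑ n ∈ Finset.range I, F n =
        (∑ n ∈ Finset.range (k + 1), F n) + ∑ n ∈ Finset.Ico (k + 1) I, F n := by
    intro R _ F
    rw [Finset.range_eq_Ico, Finset.range_eq_Ico]
    exact (Finset.sum_Ico_consecutive F (Nat.zero_le _) (by omega : k + 1 ≤ I)).symm
  have hWtail : ∀ n ∈ Finset.Ico (k + 1) I, W n * Q n = U n * Q n := by
    intro n hn
    rw [Finset.mem_Ico] at hn
    simp only [hWdef, if_neg (by omega : ¬ n < k), if_neg (by omega : ¬ n = k)]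
  have hWval : (∑ n ∈ Finset.range I, W n * Q n) =
      (∑ n ∈ Finset.range I, U n * Q n) + 1 := by
    rw [hsplit ℕ _ (fun n => W n * Q n), hsplit ℕ _ (fun n => U n * Q n),
      Finset.sum_congr rfl hWtail]
    have hheadW : (∑ n ∈ Finset.range (k + 1), W n * Q n) = (U k + 1) * Q k := by
      rw [Finset.sum_range_succ]
      have : ∀ n ∈ Finset.range k, W n * Q n = 0 := by
        intro n hn
        rw [Finset.mem_range] at hn
        simp [hWdef, hn]
      rw [Finset.sum_congr rfl this, Finset.sum_const_zero, zero_add]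
      simp [hWdef]
    have hheadU : (∑ n ∈ Finset.range (k + 1), U n * Q n) + 1 = (U k + 1) * Q k := by
      rw [Finset.sum_range_succ]
      have : ∀ n ∈ Finset.range k, U n * Q n = (M n - 1) * Q n := by
        intro n hn
        rw [Finset.mem_range] at hn
        have := hkmin n hn
        have : U n = M n - 1 := by omega
        rw [this]
      rw [Finset.sum_congr rfl this]
      have htel := tel k
      rw [add_one_mul]
      omega
    omega
  -- uniqueness of mixed-radix representation: u' = w
  have hval : ∀ v : (i : Fin I) → Fin (mfac i),
      (finPiFinEquiv v : ℕ) = ∑ i : Fin I, (v i : ℕ) * ∏ j ∈ Finset.Iio i, mfac j := by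
    intro v
    rw [finPiFinEquiv_apply]
    refine Finset.sum_congr rfl fun i _ => ?_
    congr 1
    rw [hPQ]
    simp only [hQdef]
    rw [← Fin.prod_univ_eq_prod_range (fun n => M n) i.val]
    exact Finset.prod_congr rfl fun j _ => by
      have : (Fin.castLE i.isLt.le j : Fin I).val = j.val := rfl
      rw [← hMval (Fin.castLE i.isLt.le j), this]
  have hwval : (∑ i : Fin I, (w i : ℕ) * ∏ j ∈ Finset.Iio i, mfac j) =
      ∑ n ∈ Finset.range I, W n * Q n := by
    rw [← Fin.sum_univ_eq_sum_range (fun n => W n * Q n) I]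
    exact Finset.sum_congr rfl fun i _ => by rw [hPQ, hwW]
  have hu'w : u' = w := by
    refine finPiFinEquiv.injective (Fin.val_injective ?_)
    rw [hval, hval, hcons, hsumU, hwval, hWval]
  -- final computation over ℝ
  have hrU : (∑ i : Fin I, ((u i : ℕ) : ℝ) * d i) =
      ∑ n ∈ Finset.range I, (U n : ℝ) * D n := by
    rw [← Fin.sum_univ_eq_sum_range (fun n => (U n : ℝ) * D n) I]
    exact Finset.sum_congr rfl fun i _ => by rw [hUval, hDval]
  have hrU' : (∑ i : Fin I, ((u' i : ℕ) : ℝ) * d i) =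
      ∑ n ∈ Finset.range I, (W n : ℝ) * D n := by
    rw [← Fin.sum_univ_eq_sum_range (fun n => (W n : ℝ) * D n) I]
    refine Finset.sum_congr rfl fun i _ => ?_
    rw [hu'w, hDval, hwW]
  rw [hrU, hrU', hsplit ℝ _ (fun n => (W n : ℝ) * D n),
    hsplit ℝ _ (fun n => (U n : ℝ) * D n)]
  have htail : ∀ n ∈ Finset.Ico (k + 1) I, (W n : ℝ) * D n = (U n : ℝ) * D n := by
    intro n hn
    rw [Finset.mem_Ico] at hn
    simp only [hWdef, if_neg (by omega : ¬ n < k), if_neg (by omega : ¬ n = k)]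
  rw [Finset.sum_congr rfl htail]
  have hheadW : (∑ n ∈ Finset.range (k + 1), (W n : ℝ) * D n) =
      ((U k : ℝ) + 1) * D k := by
    rw [Finset.sum_range_succ]
    have : ∀ n ∈ Finset.range k, (W n : ℝ) * D n = 0 := by
      intro n hn
      rw [Finset.mem_range] at hn
      simp [hWdef, hn]
    rw [Finset.sum_congr rfl this, Finset.sum_const_zero, zero_add]
    simp [hWdef]
  have hheadU : (∑ n ∈ Finset.range (k + 1), (U n : ℝ) * D n) =
      (∑ n ∈ Finset.range k, ((M n : ℝ) - 1) * D n) + (U k : ℝ) * D k := by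
    rw [Finset.sum_range_succ]
    congr 1
    refine Finset.sum_congr rfl fun n hn => ?_
    rw [Finset.mem_range] at hn
    have h := hkmin n hn
    congr 1
    have : (U n : ℝ) + 1 = (M n : ℝ) := by exact_mod_cast congrArg Nat.cast h
    linarith
  rw [hheadW, hheadU]
  -- the key spacing inequality from hdi
  have hdik : D k ≥ (∑ n ∈ Finset.range k, ((M n : ℝ) - 1) * D n) + δ := by
    have h := hdi ⟨k, hkI⟩
    have hconv : (∑ j ∈ Finset.Iio (⟨k, hkI⟩ : Fin I), ((mfac j : ℝ) - 1) * d j) =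
        ∑ n ∈ Finset.range k, ((M n : ℝ) - 1) * D n := by
      rw [← fin_Iio_sum_eq (⟨k, hkI⟩ : Fin I) (fun n => ((M n : ℝ) - 1) * D n)]
      exact Finset.sum_congr rfl fun j _ => by rw [hMval, hDval]
    rw [hconv] at h
    rw [← hDval ⟨k, hkI⟩] at h
    exact h
  linarith
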